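/- arXiv:2404.08077 — 2 statements merged into one kernel-verified Lean document; each statement's English description precedes it below -/
import Mathlib

section
/- Let u1, u2, u3, u4 be four points on the unit sphere S² in ℝ³ such that any three of them are linearly independent. Then the four points are not contained in any common closed hemisphere if and only if sign[u1,u2,u3] = sign[u1,u3,u4] = -sign[u1,u2,u4] = -sign[u2,u3,u4], where [u,v,w] denotes the determinant of the 3×3 matrix with columns u, v, w. -/
open Matrix

noncomputable section

/-- Determinant of the 3×3 matrix with columns `u`, `v`, `w`. -/
def det3 (u v w : Fin 3 → ℝ) : ℝ :=
  Matrix.det !![u 0, v 0, w 0; u 1, v 1, w 1; u 2, v 2, w 2]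

/-- `u` lies on the unit sphere S². -/
def onSphere (u : Fin 3 → ℝ) : Prop := u ⬝ᵥ u = 1

/-- `X` is contained in some closed hemisphere. -/
def InClosedHemisphere (X : Set (Fin 3 → ℝ)) : Prop :=
  ∃ n : Fin 3 → ℝ, n ⬝ᵥ n = 1 ∧ ∀ x ∈ X, 0 ≤ n ⬝ᵥ x

/-- `X` is balanced: not contained in any closed hemisphere. -/
def BalancedSet (X : Set (Fin 3 → ℝ)) : Prop := ¬ InClosedHemisphere X

/-- Radial projection to the unit sphere. -/
def normalize3 (x : Fin 3 → ℝ) : Fin 3 → ℝ := (Real.sqrt (x ⬝ᵥ x))⁻¹ • x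

/-- The open minor geodesic arc from `u` to `v` (endpoints excluded). -/
def openArc (u v : Fin 3 → ℝ) : Set (Fin 3 → ℝ) :=
  {x | ∃ s t : ℝ, 0 < s ∧ 0 < t ∧ x = normalize3 (s • u + t • v)}

/-- The closed minor geodesic arc from `u` to `v`. -/
def closedArc (u v : Fin 3 → ℝ) : Set (Fin 3 → ℝ) :=
  {x | ∃ s t : ℝ, 0 ≤ s ∧ 0 ≤ t ∧ 0 < s + t ∧ x = normalize3 (s • u + t • v)}

/-! ### Auxiliary lemmas -/

lemma det3_expand (u v w : Fin 3 → ℝ) :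
    det3 u v w = u 0 * v 1 * w 2 - u 0 * v 2 * w 1 - u 1 * v 0 * w 2
      + u 1 * v 2 * w 0 + u 2 * v 0 * w 1 - u 2 * v 1 * w 0 := by
  simp [det3, Matrix.det_fin_three]; ring

/-- Cramer's rule as a polynomial identity, in dot-product form. -/
lemma cramer_dot (a b c x n : Fin 3 → ℝ) :
    det3 a b c * (n ⬝ᵥ x) =
      det3 x b c * (n ⬝ᵥ a) + det3 a x c * (n ⬝ᵥ b) + det3 a b x * (n ⬝ᵥ c) := by
  simp [det3, Matrix.det_fin_three, dotProduct, Fin.sum_univ_three]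
  ring

/-- Cross product of two vectors in `Fin 3 → ℝ`. -/
def cross3 (u v : Fin 3 → ℝ) : Fin 3 → ℝ :=
  ![u 1 * v 2 - u 2 * v 1, u 2 * v 0 - u 0 * v 2, u 0 * v 1 - u 1 * v 0]

lemma cross3_dot (u v x : Fin 3 → ℝ) : cross3 u v ⬝ᵥ x = det3 x u v := by
  simp [cross3, det3, Matrix.det_fin_three, dotProduct, Fin.sum_univ_three]
  ring

lemma det3_ne_zero {u v w : Fin 3 → ℝ} (h : LinearIndependent ℝ ![u, v, w]) :
    det3 u v w ≠ 0 := by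
  have hA : IsUnit (Matrix.of ![u, v, w]) :=
    Matrix.linearIndependent_rows_iff_isUnit.mp h
  have hd : (Matrix.of ![u, v, w]).det ≠ 0 :=
    ((Matrix.isUnit_iff_isUnit_det _).mp hA).ne_zero
  have e : det3 u v w = (Matrix.of ![u, v, w]).det := by
    simp [det3, Matrix.det_fin_three]
    ring
  rw [e]; exact hd

lemma sign_eq_sign_iff {x y : ℝ} (hx : x ≠ 0) (hy : y ≠ 0) :
    Real.sign x = Real.sign y ↔ 0 < x * y := by
  constructor
  · intro hs
    rcases hx.lt_or_gt with h | h <;> rcases hy.lt_or_gt with h' | h'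
    · exact mul_pos_of_neg_of_neg h h'
    · rw [Real.sign_of_neg h, Real.sign_of_pos h'] at hs; norm_num at hs
    · rw [Real.sign_of_pos h, Real.sign_of_neg h'] at hs; norm_num at hs
    · exact mul_pos h h'
  · intro hp
    rcases hx.lt_or_gt with h | h <;> rcases hy.lt_or_gt with h' | h'
    · rw [Real.sign_of_neg h, Real.sign_of_neg h']
    · nlinarith
    · nlinarith
    · rw [Real.sign_of_pos h, Real.sign_of_pos h']

lemma sign_eq_neg_sign_iff {x y : ℝ} (hx : x ≠ 0) (hy : y ≠ 0) :
    Real.sign x = -Real.sign y ↔ x * y < 0 := by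
  constructor
  · intro hs
    rcases hx.lt_or_gt with h | h <;> rcases hy.lt_or_gt with h' | h'
    · rw [Real.sign_of_neg h, Real.sign_of_neg h'] at hs; norm_num at hs
    · exact mul_neg_of_neg_of_pos h h'
    · exact mul_neg_of_pos_of_neg h h'
    · rw [Real.sign_of_pos h, Real.sign_of_pos h'] at hs; norm_num at hs
  · intro hp
    rcases hx.lt_or_gt with h | h <;> rcases hy.lt_or_gt with h' | h'
    · nlinarith
    · rw [Real.sign_of_neg h, Real.sign_of_pos h']
    · rw [Real.sign_of_pos h, Real.sign_of_neg h']; ring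
    · nlinarith

lemma hemi_of_dots {v1 v2 v3 v4 m : Fin 3 → ℝ} (hm : m ≠ 0)
    (d1 : 0 ≤ m ⬝ᵥ v1) (d2 : 0 ≤ m ⬝ᵥ v2) (d3 : 0 ≤ m ⬝ᵥ v3) (d4 : 0 ≤ m ⬝ᵥ v4) :
    InClosedHemisphere {v1, v2, v3, v4} := by
  have h0 : 0 ≤ m ⬝ᵥ m := Finset.sum_nonneg fun i _ => mul_self_nonneg (m i)
  have hmm : 0 < m ⬝ᵥ m :=
    lt_of_le_of_ne h0 (fun h => hm (dotProduct_self_eq_zero.mp h.symm))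
  have hr : 0 < Real.sqrt (m ⬝ᵥ m) := Real.sqrt_pos.mpr hmm
  refine ⟨(Real.sqrt (m ⬝ᵥ m))⁻¹ • m, ?_, ?_⟩
  · have e : (Real.sqrt (m ⬝ᵥ m))⁻¹ • m ⬝ᵥ ((Real.sqrt (m ⬝ᵥ m))⁻¹ • m)
        = (Real.sqrt (m ⬝ᵥ m))⁻¹ * ((Real.sqrt (m ⬝ᵥ m))⁻¹ * (m ⬝ᵥ m)) := by
      rw [smul_dotProduct, dotProduct_smul, smul_eq_mul, smul_eq_mul]
    rw [e, ← mul_assoc, ← mul_inv, Real.mul_self_sqrt hmm.le]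
    exact inv_mul_cancel₀ hmm.ne'
  · intro x hx
    have : x = v1 ∨ x = v2 ∨ x = v3 ∨ x = v4 := by simpa using hx
    rcases this with rfl | rfl | rfl | rfl <;>
      · rw [smul_dotProduct, smul_eq_mul]
        positivity

lemma smul_cross_dot (D : ℝ) (a b x : Fin 3 → ℝ) :
    (D • cross3 a b) ⬝ᵥ x = D * det3 x a b := by
  rw [smul_dotProduct, cross3_dot, smul_eq_mul]

theorem four_points_balanced_iff_det_signs (u1 u2 u3 u4 : Fin 3 → ℝ)
    (h1 : onSphere u1) (h2 : onSphere u2) (h3 : onSphere u3) (h4 : onSphere u4)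
    (hli123 : LinearIndependent ℝ ![u1, u2, u3])
    (hli124 : LinearIndependent ℝ ![u1, u2, u4])
    (hli134 : LinearIndependent ℝ ![u1, u3, u4])
    (hli234 : LinearIndependent ℝ ![u2, u3, u4]) :
    BalancedSet {u1, u2, u3, u4} ↔
      (Real.sign (det3 u1 u2 u3) = Real.sign (det3 u1 u3 u4) ∧
       Real.sign (det3 u1 u2 u3) = - Real.sign (det3 u1 u2 u4) ∧
       Real.sign (det3 u1 u2 u3) = - Real.sign (det3 u2 u3 u4)) := by
  have hD : det3 u1 u2 u3 ≠ 0 := det3_ne_zero hli123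
  have hB : det3 u1 u3 u4 ≠ 0 := det3_ne_zero hli134
  have hC : det3 u1 u2 u4 ≠ 0 := det3_ne_zero hli124
  have hA : det3 u2 u3 u4 ≠ 0 := det3_ne_zero hli234
  rw [sign_eq_sign_iff hD hB, sign_eq_neg_sign_iff hD hC, sign_eq_neg_sign_iff hD hA]
  constructor
  · -- balanced ⇒ sign conditions
    intro hbal
    by_contra hnot
    apply hbal
    by_cases hb : 0 < det3 u1 u2 u3 * det3 u1 u3 u4
    · by_cases hc : det3 u1 u2 u3 * det3 u1 u2 u4 < 0
      · by_cases ha : det3 u1 u2 u3 * det3 u2 u3 u4 < 0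
        · exact absurd ⟨hb, hc, ha⟩ hnot
        · -- 0 < D * A : hemisphere with normal D • (u2 × u3)
          have ha' : 0 < det3 u1 u2 u3 * det3 u2 u3 u4 :=
            ((mul_ne_zero hD hA).lt_or_gt.resolve_left ha)
          set m : Fin 3 → ℝ := det3 u1 u2 u3 • cross3 u2 u3 with hmdef
          have e1 : m ⬝ᵥ u1 = det3 u1 u2 u3 * det3 u1 u2 u3 := by
            rw [hmdef, smul_cross_dot]
          have e2 : m ⬝ᵥ u2 = 0 := by
            rw [hmdef, smul_cross_dot]
            have : det3 u2 u2 u3 = 0 := by rw [det3_expand]; ring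
            rw [this, mul_zero]
          have e3 : m ⬝ᵥ u3 = 0 := by
            rw [hmdef, smul_cross_dot]
            have : det3 u3 u2 u3 = 0 := by rw [det3_expand]; ring
            rw [this, mul_zero]
          have e4 : m ⬝ᵥ u4 = det3 u1 u2 u3 * det3 u2 u3 u4 := by
            rw [hmdef, smul_cross_dot]
            have : det3 u4 u2 u3 = det3 u2 u3 u4 := by
              rw [det3_expand, det3_expand]; ring
            rw [this]
          have hm : m ≠ 0 := by
            intro h0
            rw [h0, zero_dotProduct] at e1
            exact hD (by nlinarith [e1.symm])
          exact hemi_of_dots hm (by rw [e1]; exact mul_self_nonneg _)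
            (le_of_eq e2.symm) (le_of_eq e3.symm) (by rw [e4]; exact ha'.le)
      · -- 0 < D * C : hemisphere with normal D • (u1 × u2)
        have hc' : 0 < det3 u1 u2 u3 * det3 u1 u2 u4 :=
          ((mul_ne_zero hD hC).lt_or_gt.resolve_left hc)
        set m : Fin 3 → ℝ := det3 u1 u2 u3 • cross3 u1 u2 with hmdef
        have e1 : m ⬝ᵥ u1 = 0 := by
          rw [hmdef, smul_cross_dot]
          have : det3 u1 u1 u2 = 0 := by rw [det3_expand]; ring
          rw [this, mul_zero]
        have e2 : m ⬝ᵥ u2 = 0 := by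
          rw [hmdef, smul_cross_dot]
          have : det3 u2 u1 u2 = 0 := by rw [det3_expand]; ring
          rw [this, mul_zero]
        have e3 : m ⬝ᵥ u3 = det3 u1 u2 u3 * det3 u1 u2 u3 := by
          rw [hmdef, smul_cross_dot]
          have : det3 u3 u1 u2 = det3 u1 u2 u3 := by
            rw [det3_expand, det3_expand]; ring
          rw [this]
        have e4 : m ⬝ᵥ u4 = det3 u1 u2 u3 * det3 u1 u2 u4 := by
          rw [hmdef, smul_cross_dot]
          have : det3 u4 u1 u2 = det3 u1 u2 u4 := by
            rw [det3_expand, det3_expand]; ring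
          rw [this]
        have hm : m ≠ 0 := by
          intro h0
          rw [h0, zero_dotProduct] at e3
          exact hD (by nlinarith [e3.symm])
        exact hemi_of_dots hm (le_of_eq e1.symm) (le_of_eq e2.symm)
          (by rw [e3]; exact mul_self_nonneg _) (by rw [e4]; exact hc'.le)
    · -- D * B < 0 : hemisphere with normal D • (u3 × u1)
      have hb' : det3 u1 u2 u3 * det3 u1 u3 u4 < 0 :=
        ((mul_ne_zero hD hB).lt_or_gt.resolve_right hb)
      set m : Fin 3 → ℝ := det3 u1 u2 u3 • cross3 u3 u1 with hmdef
      have e1 : m ⬝ᵥ u1 = 0 := by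
        rw [hmdef, smul_cross_dot]
        have : det3 u1 u3 u1 = 0 := by rw [det3_expand]; ring
        rw [this, mul_zero]
      have e2 : m ⬝ᵥ u2 = det3 u1 u2 u3 * det3 u1 u2 u3 := by
        rw [hmdef, smul_cross_dot]
        have : det3 u2 u3 u1 = det3 u1 u2 u3 := by
          rw [det3_expand, det3_expand]; ring
        rw [this]
      have e3 : m ⬝ᵥ u3 = 0 := by
        rw [hmdef, smul_cross_dot]
        have : det3 u3 u3 u1 = 0 := by rw [det3_expand]; ring
        rw [this, mul_zero]
      have e4 : m ⬝ᵥ u4 = -(det3 u1 u2 u3 * det3 u1 u3 u4) := by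
        rw [hmdef, smul_cross_dot]
        have : det3 u4 u3 u1 = -det3 u1 u3 u4 := by
          rw [det3_expand, det3_expand]; ring
        rw [this]; ring
      have hm : m ≠ 0 := by
        intro h0
        rw [h0, zero_dotProduct] at e2
        exact hD (by nlinarith [e2.symm])
      exact hemi_of_dots hm (le_of_eq e1.symm)
        (by rw [e2]; exact mul_self_nonneg _) (le_of_eq e3.symm)
        (by rw [e4]; linarith)
  · -- sign conditions ⇒ balanced
    rintro ⟨hb, hc, ha⟩ ⟨n, hn, hle⟩
    have t1 : 0 ≤ n ⬝ᵥ u1 := hle u1 (by simp)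
    have t2 : 0 ≤ n ⬝ᵥ u2 := hle u2 (by simp)
    have t3 : 0 ≤ n ⬝ᵥ u3 := hle u3 (by simp)
    have t4 : 0 ≤ n ⬝ᵥ u4 := hle u4 (by simp)
    have key := cramer_dot u1 u2 u3 u4 n
    have p1 : det3 u4 u2 u3 = det3 u2 u3 u4 := by
      rw [det3_expand, det3_expand]; ring
    have p2 : det3 u1 u4 u3 = -det3 u1 u3 u4 := by
      rw [det3_expand, det3_expand]; ring
    rw [p1, p2] at key
    -- multiply Cramer identity by D
    have key2 : det3 u1 u2 u3 * det3 u1 u2 u3 * (n ⬝ᵥ u4) =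
        det3 u1 u2 u3 * det3 u2 u3 u4 * (n ⬝ᵥ u1)
        - det3 u1 u2 u3 * det3 u1 u3 u4 * (n ⬝ᵥ u2)
        + det3 u1 u2 u3 * det3 u1 u2 u4 * (n ⬝ᵥ u3) := by
      linear_combination det3 u1 u2 u3 * key
    have T1 : det3 u1 u2 u3 * det3 u2 u3 u4 * (n ⬝ᵥ u1) ≤ 0 := by nlinarith
    have T2 : 0 ≤ det3 u1 u2 u3 * det3 u1 u3 u4 * (n ⬝ᵥ u2) := by nlinarith
    have T3 : det3 u1 u2 u3 * det3 u1 u2 u4 * (n ⬝ᵥ u3) ≤ 0 := by nlinarith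
    have T4 : 0 ≤ det3 u1 u2 u3 * det3 u1 u2 u3 * (n ⬝ᵥ u4) := by
      nlinarith [mul_self_nonneg (det3 u1 u2 u3)]
    have s1 : det3 u1 u2 u3 * det3 u2 u3 u4 * (n ⬝ᵥ u1) = 0 := by linarith
    have s2 : det3 u1 u2 u3 * det3 u1 u3 u4 * (n ⬝ᵥ u2) = 0 := by linarith
    have s3 : det3 u1 u2 u3 * det3 u1 u2 u4 * (n ⬝ᵥ u3) = 0 := by linarith
    have z1 : n ⬝ᵥ u1 = 0 :=
      (mul_eq_zero.mp s1).resolve_left (mul_ne_zero hD hA)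
    have z2 : n ⬝ᵥ u2 = 0 :=
      (mul_eq_zero.mp s2).resolve_left (mul_ne_zero hD hB)
    have z3 : n ⬝ᵥ u3 = 0 :=
      (mul_eq_zero.mp s3).resolve_left (mul_ne_zero hD hC)
    have key3 := cramer_dot u1 u2 u3 n n
    rw [hn, z1, z2, z3, mul_one, mul_zero, mul_zero, mul_zero] at key3
    simp at key3
    exact hD key3
end
end

section
/- Let u_i, u_{i+1}, u_j, u_{j+1} ∈ S² be in general position (any three linearly independent). The open minor spherical arcs from u_i to u_{i+1} and from u_j to u_{j+1} intersect if and only if [u_i,u_{i+1},u_j] and [u_{i+1},u_j,u_{j+1}] have the same sign, [u_i,u_{i+1},u_{j+1}] and [u_i,u_j,u_{j+1}] have the same sign, and these two common signs are opposite. -/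
open Matrix

noncomputable section

lemma lin_indep_coeffs {u v w : Fin 3 → ℝ} (h : LinearIndependent ℝ ![u, v, w])
    {x y z : ℝ} (hz : x • u + y • v + z • w = 0) : x = 0 ∧ y = 0 ∧ z = 0 := by
  have := Fintype.linearIndependent_iff.1 h ![x, y, z] (by
    simpa [Fin.sum_univ_three] using hz)
  exact ⟨this 0, this 1, this 2⟩

lemma exists_decomp {u v w d : Fin 3 → ℝ} (h : LinearIndependent ℝ ![u, v, w]) :
    ∃ α β γ : ℝ, d = α • u + β • v + γ • w := by
  have hcard : Fintype.card (Fin 3) = Module.finrank ℝ (Fin 3 → ℝ) := by simp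
  let B := basisOfLinearIndependentOfCardEqFinrank h hcard
  have hB : ⇑B = ![u, v, w] := coe_basisOfLinearIndependentOfCardEqFinrank h hcard
  refine ⟨B.repr d 0, B.repr d 1, B.repr d 2, ?_⟩
  have h3 := B.sum_repr d
  simp only [Fin.sum_univ_three, hB, Matrix.cons_val_zero, Matrix.cons_val_one,
    Matrix.head_cons, Matrix.cons_val_two, Matrix.tail_cons] at h3
  exact h3.symm

lemma dot_self_pos {x : Fin 3 → ℝ} (hx : x ≠ 0) : 0 < x ⬝ᵥ x := by
  have hnn : 0 ≤ x ⬝ᵥ x := Finset.sum_nonneg fun i _ => mul_self_nonneg (x i)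
  rcases lt_or_eq_of_le hnn with h | h
  · exact h
  · exact absurd (dotProduct_self_eq_zero.1 h.symm) hx

lemma normalize3_eq {x y : Fin 3 → ℝ} (hx : x ≠ 0) (hy : y ≠ 0)
    (h : normalize3 x = normalize3 y) : ∃ r : ℝ, 0 < r ∧ x = r • y := by
  have hxp := dot_self_pos hx
  have hyp := dot_self_pos hy
  have hxs : 0 < Real.sqrt (x ⬝ᵥ x) := Real.sqrt_pos.2 hxp
  have hys : 0 < Real.sqrt (y ⬝ᵥ y) := Real.sqrt_pos.2 hyp
  refine ⟨Real.sqrt (x ⬝ᵥ x) / Real.sqrt (y ⬝ᵥ y), div_pos hxs hys, ?_⟩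
  have := congrArg (fun z => Real.sqrt (x ⬝ᵥ x) • z) h
  simp only [normalize3, smul_smul] at this
  rw [mul_inv_cancel₀ hxs.ne', one_smul] at this
  rw [div_eq_mul_inv]; exact this

lemma det3_bcd {a b c : Fin 3 → ℝ} (α β γ : ℝ) :
    det3 b c (α • a + β • b + γ • c) = α * det3 a b c := by
  simp [det3, Matrix.det_fin_three]; ring

lemma det3_abd {a b c : Fin 3 → ℝ} (α β γ : ℝ) :
    det3 a b (α • a + β • b + γ • c) = γ * det3 a b c := by
  simp [det3, Matrix.det_fin_three]; ring

lemma det3_acd {a b c : Fin 3 → ℝ} (α β γ : ℝ) :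
    det3 a c (α • a + β • b + γ • c) = -β * det3 a b c := by
  simp [det3, Matrix.det_fin_three]; ring

theorem arcs_intersect_iff_det_signs (a b c d : Fin 3 → ℝ)
    (ha : onSphere a) (hb : onSphere b) (hc : onSphere c) (hd : onSphere d)
    (habc : LinearIndependent ℝ ![a, b, c])
    (habd : LinearIndependent ℝ ![a, b, d])
    (hacd : LinearIndependent ℝ ![a, c, d])
    (hbcd : LinearIndependent ℝ ![b, c, d]) :
    (openArc a b ∩ openArc c d).Nonempty ↔
      (0 < det3 a b c * det3 b c d ∧ 0 < det3 a b d * det3 a c d ∧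
        det3 a b c * det3 a b d < 0) := by
  obtain ⟨α, β, γ, hdec⟩ := exists_decomp (d := d) habc
  have hD : det3 a b c ≠ 0 := det3_ne_zero habc
  have hDD : 0 < det3 a b c * det3 a b c := mul_self_pos.2 hD
  have hd2 : det3 b c d = α * det3 a b c := by rw [hdec]; exact det3_bcd α β γ
  have hd3 : det3 a b d = γ * det3 a b c := by rw [hdec]; exact det3_abd α β γ
  have hd4 : det3 a c d = -β * det3 a b c := by rw [hdec]; exact det3_acd α β γ
  have hab0 : ∀ s t : ℝ, 0 < s → 0 < t → s • a + t • b ≠ 0 := by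
    intro s t hs ht hzero
    have h0 : s • a + t • b + (0:ℝ) • c = 0 := by simpa using hzero
    exact hs.ne' (lin_indep_coeffs habc h0).1
  have hcd0 : ∀ p q : ℝ, 0 < p → 0 < q → p • c + q • d ≠ 0 := by
    intro p q hp hq hzero
    have h0 : (0:ℝ) • b + p • c + q • d = 0 := by simpa using hzero
    exact hp.ne' (lin_indep_coeffs hbcd h0).2.1
  constructor
  · rintro ⟨x, ⟨s, t, hs, ht, hx1⟩, ⟨p, q, hp, hq, hx2⟩⟩
    have heq : normalize3 (s • a + t • b) = normalize3 (p • c + q • d) :=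
      hx1.symm.trans hx2
    obtain ⟨r, hr, hre⟩ := normalize3_eq (hab0 s t hs ht) (hcd0 p q hp hq) heq
    have hkey : (s - r*q*α) • a + (t - r*q*β) • b + (-(r*p) - r*q*γ) • c = 0 := by
      funext i
      have h1 := congrFun hre i
      have h2 := congrFun hdec i
      simp only [Pi.add_apply, Pi.smul_apply, smul_eq_mul, Pi.zero_apply] at h1 h2 ⊢
      linear_combination h1 + (r*q) * h2
    obtain ⟨e1, e2, e3⟩ := lin_indep_coeffs habc hkey
    have hrq : 0 < r * q := mul_pos hr hq
    have hrp : 0 < r * p := mul_pos hr hp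
    have hα : 0 < α := by nlinarith
    have hβ : 0 < β := by nlinarith
    have hγ : γ < 0 := by nlinarith
    refine ⟨?_, ?_, ?_⟩ <;> simp only [hd2, hd3, hd4] <;>
      nlinarith [mul_pos hα hDD, mul_pos hβ hDD, mul_pos (neg_pos.2 hγ) hDD,
        mul_pos (mul_pos (neg_pos.2 hγ) hβ) hDD]
  · rintro ⟨g1, g2, g3⟩
    simp only [hd2, hd3, hd4] at g1 g2 g3
    have hα : 0 < α := by nlinarith
    have hγ : γ < 0 := by nlinarith
    have hβ : 0 < β := by nlinarith
    refine ⟨normalize3 (α • a + β • b), ⟨α, β, hα, hβ, rfl⟩,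
      ⟨-γ, 1, neg_pos.2 hγ, one_pos, ?_⟩⟩
    have : (-γ) • c + (1:ℝ) • d = α • a + β • b := by
      funext i
      have h2 := congrFun hdec i
      simp only [Pi.add_apply, Pi.smul_apply, smul_eq_mul] at h2 ⊢
      linear_combination h2
    rw [this]
end
end
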